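/- Let A be an m×N matrix satisfying the RIP₁,₂(t, δ) property for some t ≥ 1 and 0 ≤ δ ≤ 1. Then for every z ∈ ℝ^N, ‖Az‖₁ ≤ (1+δ)(‖z‖₂ + ‖z‖₁/√t). -/

import Mathlib

open Finset Matrix

/-- From any finset `s` with at least `t` elements we can pick `t` elements on which
`|z ·|` is at least as large as anywhere on the rest of `s`. -/
lemma exists_top {N : ℕ} (z : Fin N → ℝ) :
    ∀ (t : ℕ) (s : Finset (Fin N)), t ≤ s.card →
      ∃ T, T ⊆ s ∧ T.card = t ∧ ∀ i ∈ s \ T, ∀ j ∈ T, |z i| ≤ |z j| := by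
  intro t
  induction t with
  | zero => intro s _; exact ⟨∅, empty_subset s, card_empty, by simp⟩
  | succ t ih =>
    intro s hs
    have hne : s.Nonempty := card_pos.mp (by omega)
    obtain ⟨j, hj, hmax⟩ := s.exists_max_image (fun i => |z i|) hne
    obtain ⟨T', hT'sub, hT'card, hdom⟩ := ih (s.erase j)
      (by rw [card_erase_of_mem hj]; omega)
    have hjT' : j ∉ T' := fun h => (mem_erase.mp (hT'sub h)).1 rfl
    refine ⟨insert j T', insert_subset hj (hT'sub.trans (erase_subset _ _)), ?_, ?_⟩
    · rw [card_insert_of_notMem hjT', hT'card]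
    · intro i hi k hk
      obtain ⟨his, hiT⟩ := mem_sdiff.mp hi
      rcases mem_insert.mp hk with rfl | hk'
      · exact hmax i his
      · exact hdom i (mem_sdiff.mpr ⟨mem_erase.mpr
          ⟨fun h => hiT (h ▸ mem_insert_self _ _), his⟩,
          fun h => hiT (mem_insert_of_mem h)⟩) k hk'

lemma rip_key {m N t : ℕ} (ht : 1 ≤ t) (δ : ℝ) (hδ0 : 0 ≤ δ)
    (A : Matrix (Fin m) (Fin N) ℝ)
    (hRIP : ∀ x : Fin N → ℝ, (Finset.univ.filter fun i => x i ≠ 0).card ≤ t →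
      ∑ i, |(A *ᵥ x) i| ≤ (1 + δ) * Real.sqrt (∑ i, x i ^ 2)) :
    ∀ n : ℕ, ∀ (z : Fin N → ℝ) (T : Finset (Fin N)),
      ((Finset.univ.filter fun i => z i ≠ 0) \ T).card ≤ n →
      T.card ≤ t →
      (((Finset.univ.filter fun i => z i ≠ 0) \ T).Nonempty →
        T.card = t ∧ ∀ i ∈ (Finset.univ.filter fun i => z i ≠ 0) \ T, ∀ j ∈ T, |z i| ≤ |z j|) →
      ∑ i, |(A *ᵥ z) i| ≤ (1 + δ) * (Real.sqrt (∑ i ∈ T, z i ^ 2) + (∑ i, |z i|) / Real.sqrt t) := by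
  have h1δ : (0:ℝ) ≤ 1 + δ := by linarith
  have htpos : (0:ℝ) < Real.sqrt t :=
    Real.sqrt_pos.mpr (by exact_mod_cast Nat.pos_of_ne_zero (by omega))
  intro n
  induction n with
  | zero =>
    intro z T hcard hTt _
    -- the difference is empty
    have hdiff : ((Finset.univ.filter fun i => z i ≠ 0) \ T) = ∅ :=
      card_eq_zero.mp (Nat.le_zero.mp hcard)
    have hz0 : ∀ i, i ∉ T → z i = 0 := by
      intro i hi
      by_contra h
      have : i ∈ ((Finset.univ.filter fun i => z i ≠ 0) \ T) :=
        mem_sdiff.mpr ⟨mem_filter.mpr ⟨mem_univ i, h⟩, hi⟩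
      simp [hdiff] at this
    have hsum : ∑ i ∈ T, z i ^ 2 = ∑ i, z i ^ 2 :=
      Finset.sum_subset (subset_univ T) (fun i _ hi => by rw [hz0 i hi]; ring)
    have hsupp : (Finset.univ.filter fun i => z i ≠ 0).card ≤ t := by
      refine le_trans (card_le_card ?_) hTt
      intro i hi
      by_contra h
      exact (mem_filter.mp hi).2 (hz0 i h)
    calc ∑ i, |(A *ᵥ z) i| ≤ (1 + δ) * Real.sqrt (∑ i, z i ^ 2) := hRIP z hsupp
      _ = (1 + δ) * Real.sqrt (∑ i ∈ T, z i ^ 2) := by rw [hsum]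
      _ ≤ (1 + δ) * (Real.sqrt (∑ i ∈ T, z i ^ 2) + (∑ i, |z i|) / Real.sqrt t) := by
          refine mul_le_mul_of_nonneg_left (le_add_of_nonneg_right ?_) h1δ
          exact div_nonneg (Finset.sum_nonneg fun i _ => abs_nonneg _) htpos.le
  | succ n ih =>
    intro z T hcard hTt hcond
    by_cases hdiff : ((Finset.univ.filter fun i => z i ≠ 0) \ T) = ∅
    · -- same as base case
      have hz0 : ∀ i, i ∉ T → z i = 0 := by
        intro i hi
        by_contra h
        have : i ∈ ((Finset.univ.filter fun i => z i ≠ 0) \ T) :=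
          mem_sdiff.mpr ⟨mem_filter.mpr ⟨mem_univ i, h⟩, hi⟩
        simp [hdiff] at this
      have hsum : ∑ i ∈ T, z i ^ 2 = ∑ i, z i ^ 2 :=
        Finset.sum_subset (subset_univ T) (fun i _ hi => by rw [hz0 i hi]; ring)
      have hsupp : (Finset.univ.filter fun i => z i ≠ 0).card ≤ t := by
        refine le_trans (card_le_card ?_) hTt
        intro i hi
        by_contra h
        exact (mem_filter.mp hi).2 (hz0 i h)
      calc ∑ i, |(A *ᵥ z) i| ≤ (1 + δ) * Real.sqrt (∑ i, z i ^ 2) := hRIP z hsupp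
        _ = (1 + δ) * Real.sqrt (∑ i ∈ T, z i ^ 2) := by rw [hsum]
        _ ≤ (1 + δ) * (Real.sqrt (∑ i ∈ T, z i ^ 2) + (∑ i, |z i|) / Real.sqrt t) := by
            refine mul_le_mul_of_nonneg_left (le_add_of_nonneg_right ?_) h1δ
            exact div_nonneg (Finset.sum_nonneg fun i _ => abs_nonneg _) htpos.le
    · have hne : ((Finset.univ.filter fun i => z i ≠ 0) \ T).Nonempty :=
        nonempty_iff_ne_empty.mpr hdiff
      obtain ⟨hTcard, hdom⟩ := hcond hne
      set R : Finset (Fin N) := (Finset.univ.filter fun i => z i ≠ 0) \ T with hR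
      -- split z
      set x : Fin N → ℝ := fun i => if i ∈ T then z i else 0 with hx
      set z' : Fin N → ℝ := fun i => if i ∈ T then 0 else z i with hz'
      have hsplit : z = x + z' := by
        funext i
        by_cases h : i ∈ T <;> simp [hx, hz', h]
      -- support of z'
      have hsuppz' : (Finset.univ.filter fun i => z' i ≠ 0) = R := by
        ext i
        by_cases h : i ∈ T <;> simp [hR, hz', h]
      -- l1 split
      have hl1 : (∑ i, |z i|) = (∑ i ∈ T, |z i|) + ∑ i, |z' i| := by
        have : ∀ i, |z i| = |x i| + |z' i| := by
          intro i; by_cases h : i ∈ T <;> simp [hx, hz', h]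
        rw [Finset.sum_congr rfl fun i _ => this i, Finset.sum_add_distrib]
        congr 1
        rw [← Finset.sum_subset (subset_univ T) (fun i _ hi => by simp [hx, hi])]
        exact Finset.sum_congr rfl fun i hi => by simp [hx, hi]
      -- bound on ‖Ax‖₁
      have hxsupp : (Finset.univ.filter fun i => x i ≠ 0).card ≤ t := by
        refine le_trans (card_le_card ?_) hTt
        intro i hi
        by_contra h
        exact (mem_filter.mp hi).2 (by simp [hx, h])
      have hxsum : ∑ i, x i ^ 2 = ∑ i ∈ T, z i ^ 2 := by
        rw [← Finset.sum_subset (subset_univ T) (fun i _ hi => by simp [hx, hi])]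
        exact Finset.sum_congr rfl fun i hi => by simp [hx, hi]
      have hAx : ∑ i, |(A *ᵥ x) i| ≤ (1 + δ) * Real.sqrt (∑ i ∈ T, z i ^ 2) := by
        rw [← hxsum]; exact hRIP x hxsupp
      -- abbreviation
      set L : ℝ := ∑ i ∈ T, |z i| with hL
      have hLnn : 0 ≤ L := Finset.sum_nonneg fun i _ => abs_nonneg _
      -- pointwise bound on R
      have hpt : ∀ i ∈ R, |z i| ≤ L / t := by
        intro i hi
        rw [le_div_iff₀ (by exact_mod_cast Nat.pos_of_ne_zero (by omega))]
        calc |z i| * t = ∑ _j ∈ T, |z i| := by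
              rw [Finset.sum_const, hTcard, nsmul_eq_mul, mul_comm]
          _ ≤ ∑ j ∈ T, |z j| := Finset.sum_le_sum fun j hj => hdom i hi j hj
      -- now pick the top set for z'
      obtain ⟨S, hSsub, hScard, hSdom⟩ :
          ∃ S, S ⊆ R ∧ S.card ≤ t ∧ (((Finset.univ.filter fun i => z' i ≠ 0) \ S).Nonempty →
            S.card = t ∧ ∀ i ∈ (Finset.univ.filter fun i => z' i ≠ 0) \ S, ∀ j ∈ S,
              |z' i| ≤ |z' j|) := by
        by_cases hRt : R.card ≤ t
        · refine ⟨R, Subset.rfl, hRt, ?_⟩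
          intro h
          exfalso
          rw [hsuppz', sdiff_self] at h
          exact not_nonempty_empty h
        · obtain ⟨S, h1, h2, h3⟩ := exists_top z' t R (le_of_not_ge hRt)
          refine ⟨S, h1, h2.le, fun _ => ⟨h2, ?_⟩⟩
          rw [hsuppz']
          exact h3
      have hdiffcard : ((Finset.univ.filter fun i => z' i ≠ 0) \ S).card ≤ n := by
        rw [hsuppz']
        have h1 : (R \ S).card = R.card - S.card := card_sdiff_of_subset hSsub
        have h2 : R.card ≤ n + 1 := hcard
        have h3 : 1 ≤ S.card ∨ R \ S = ∅ := by
          by_cases h : (R \ S).Nonempty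
          · left
            have := hSdom (by rwa [hsuppz'])
            omega
          · right; exact not_nonempty_iff_eq_empty.mp h
        rcases h3 with h3 | h3
        · omega
        · rw [h3]; simp
      have hAz' := ih z' S hdiffcard hScard hSdom
      -- bound √(∑ S z'²) ≤ L / √t
      have hS2 : Real.sqrt (∑ i ∈ S, z' i ^ 2) ≤ L / Real.sqrt t := by
        have hbound : ∑ i ∈ S, z' i ^ 2 ≤ L ^ 2 / t := by
          have : ∀ i ∈ S, z' i ^ 2 ≤ (L / t) ^ 2 := by
            intro i hi
            have hiR := hSsub hi
            have hiT : i ∉ T := (mem_sdiff.mp hiR).2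
            have : |z' i| ≤ L / t := by
              simpa [hz', hiT] using hpt i hiR
            calc z' i ^ 2 = |z' i| ^ 2 := (sq_abs _).symm
              _ ≤ (L / t) ^ 2 := by
                  have h0 : (0:ℝ) ≤ |z' i| := abs_nonneg _
                  nlinarith
          calc ∑ i ∈ S, z' i ^ 2 ≤ ∑ _i ∈ S, (L / t) ^ 2 := Finset.sum_le_sum this
            _ = S.card * (L / t) ^ 2 := by rw [Finset.sum_const, nsmul_eq_mul]
            _ ≤ t * (L / t) ^ 2 := by
                refine mul_le_mul_of_nonneg_right ?_ (sq_nonneg _)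
                exact_mod_cast hScard
            _ = L ^ 2 / t := by
                field_simp
        calc Real.sqrt (∑ i ∈ S, z' i ^ 2) ≤ Real.sqrt (L ^ 2 / t) :=
              Real.sqrt_le_sqrt hbound
          _ = L / Real.sqrt t := by
              rw [Real.sqrt_div (sq_nonneg L), Real.sqrt_sq hLnn]
      -- combine
      have htri : ∑ i, |(A *ᵥ z) i| ≤ (∑ i, |(A *ᵥ x) i|) + ∑ i, |(A *ᵥ z') i| := by
        rw [← Finset.sum_add_distrib]
        refine Finset.sum_le_sum fun i _ => ?_
        rw [hsplit, mulVec_add]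
        exact abs_add_le _ _
      have hz'l1 : (∑ i, |z' i|) = (∑ i, |z i|) - L := by rw [hl1]; ring
      calc ∑ i, |(A *ᵥ z) i|
          ≤ (∑ i, |(A *ᵥ x) i|) + ∑ i, |(A *ᵥ z') i| := htri
        _ ≤ (1 + δ) * Real.sqrt (∑ i ∈ T, z i ^ 2) +
            (1 + δ) * (Real.sqrt (∑ i ∈ S, z' i ^ 2) + (∑ i, |z' i|) / Real.sqrt t) :=
              add_le_add hAx hAz'
        _ ≤ (1 + δ) * Real.sqrt (∑ i ∈ T, z i ^ 2) +
            (1 + δ) * (L / Real.sqrt t + ((∑ i, |z i|) - L) / Real.sqrt t) := by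
              refine add_le_add_right (mul_le_mul_of_nonneg_left ?_ h1δ) _
              rw [hz'l1]
              exact add_le_add_left hS2 _
        _ = (1 + δ) * (Real.sqrt (∑ i ∈ T, z i ^ 2) + (∑ i, |z i|) / Real.sqrt t) := by
              rw [← add_div]
              ring_nf

theorem rip12_l1_upper (m N t : ℕ) (ht : 1 ≤ t) (δ : ℝ) (hδ0 : 0 ≤ δ) (hδ1 : δ ≤ 1)
    (A : Matrix (Fin m) (Fin N) ℝ)
    (hRIP : ∀ x : Fin N → ℝ, (Finset.univ.filter fun i => x i ≠ 0).card ≤ t →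
      (1 - δ) * Real.sqrt (∑ i, x i ^ 2) ≤ ∑ i, |(A *ᵥ x) i| ∧
      ∑ i, |(A *ᵥ x) i| ≤ (1 + δ) * Real.sqrt (∑ i, x i ^ 2)) :
    ∀ z : Fin N → ℝ,
      ∑ i, |(A *ᵥ z) i|
        ≤ (1 + δ) * (Real.sqrt (∑ i, z i ^ 2) + (∑ i, |z i|) / Real.sqrt t) := by
  intro z
  have h1δ : (0:ℝ) ≤ 1 + δ := by linarith
  have hRIP' : ∀ x : Fin N → ℝ, (Finset.univ.filter fun i => x i ≠ 0).card ≤ t →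
      ∑ i, |(A *ᵥ x) i| ≤ (1 + δ) * Real.sqrt (∑ i, x i ^ 2) :=
    fun x hx => (hRIP x hx).2
  set s : Finset (Fin N) := Finset.univ.filter fun i => z i ≠ 0 with hs
  -- choose T
  obtain ⟨T, hTsub, hTt, hTcond⟩ :
      ∃ T : Finset (Fin N), T ⊆ Finset.univ ∧ T.card ≤ t ∧
        ((s \ T).Nonempty → T.card = t ∧ ∀ i ∈ s \ T, ∀ j ∈ T, |z i| ≤ |z j|) := by
    by_cases hst : s.card ≤ t
    · refine ⟨s, subset_univ s, hst, fun h => absurd h ?_⟩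
      rw [sdiff_self]
      exact not_nonempty_empty
    · obtain ⟨T, h1, h2, h3⟩ := exists_top z t s (le_of_not_ge hst)
      exact ⟨T, subset_univ T, h2.le, fun _ => ⟨h2, h3⟩⟩
  have hmain := rip_key ht δ hδ0 A hRIP' (s \ T).card z T le_rfl hTt hTcond
  refine hmain.trans (mul_le_mul_of_nonneg_left (add_le_add_left ?_ _) h1δ)
  exact Real.sqrt_le_sqrt (Finset.sum_le_sum_of_subset_of_nonneg (subset_univ T)
    fun i _ _ => sq_nonneg _)
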